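/- Let l, m be natural numbers with l+m even, and let Q₈^Δ := {(A,A) : A ∈ Q₈} ⊂ SU(2)×SU(2) act on V_l⊗V_m by ρ_l⊗ρ_m. If (l+m)/2 is even, then the subspace of vectors fixed by every element of Q₈^Δ equals the complex span of the vectors z₀^{l−i}z₁^{i} ⊗ z₀^{m−a}z₁^{a} + z₀^{i}z₁^{l−i} ⊗ z₀^{a}z₁^{m−a} over all indices 0 ≤ i ≤ l, 0 ≤ a ≤ m with i+a even. If (l+m)/2 is odd, then the fixed subspace equals the complex span of the vectors z₀^{l−i}z₁^{i} ⊗ z₀^{m−a}z₁^{a} − z₀^{i}z₁^{l−i} ⊗ z₀^{a}z₁^{m−a} over all indices 0 ≤ i ≤ l, 0 ≤ a ≤ m with i+a odd. -/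

import Mathlib

/-!
STATEMENT 2: Fixed vectors of the diagonal quaternion group Q₈^Δ ⊂ SU(2)×SU(2)
on V_l⊗V_m (l+m even): if (l+m)/2 is even the fixed subspace is spanned by the
symmetric combinations z₀^{l−i}z₁^{i} ⊗ z₀^{m−a}z₁^{a} + z₀^{i}z₁^{l−i} ⊗ z₀^{a}z₁^{m−a}
with i+a even; if (l+m)/2 is odd, by the antisymmetric combinations with i+a odd.
-/

open MvPolynomial TensorProduct

noncomputable section

abbrev Mat2 : Type := Matrix (Fin 2) (Fin 2) ℂ

abbrev P2 : Type := MvPolynomial (Fin 2) ℂ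

/-- The substitution action `(ρ(g) f)(z₀,z₁) = f((z₀,z₁)g)`. -/
def polyAct (g : Mat2) : P2 →ₗ[ℂ] P2 :=
  (MvPolynomial.aeval
    (fun j : Fin 2 => ∑ i : Fin 2, MvPolynomial.C (g i j) * MvPolynomial.X i) :
      P2 →ₐ[ℂ] P2).toLinearMap

/-- The action ρ_l(A)⊗ρ_m(B) on V_l⊗V_m ⊆ P2 ⊗ P2. -/
def tAct (g h : Mat2) : P2 ⊗[ℂ] P2 →ₗ[ℂ] P2 ⊗[ℂ] P2 :=
  TensorProduct.map (polyAct g) (polyAct h)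

def Dmat : Mat2 := !![Complex.I, 0; 0, -Complex.I]
def Jmat : Mat2 := !![0, 1; -1, 0]
def Kmat : Mat2 := !![0, Complex.I; Complex.I, 0]

/-- The quaternion subgroup Q₈ of SU(2). -/
def Q8 : Set Mat2 := {1, -1, Dmat, -Dmat, Jmat, -Jmat, Kmat, -Kmat}

/-- The copy of V_l⊗V_m inside P2 ⊗ P2: the image of the tensor product of the
homogeneous components of degrees l and m. -/
def Vbideg (l m : ℕ) : Submodule ℂ (P2 ⊗[ℂ] P2) :=
  LinearMap.range (TensorProduct.map
    (MvPolynomial.homogeneousSubmodule (Fin 2) ℂ l).subtype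
    (MvPolynomial.homogeneousSubmodule (Fin 2) ℂ m).subtype)

-- basic lemmas
lemma polyAct_mono (g : Mat2) (p q : ℕ) :
    polyAct g (X 0 ^ p * X 1 ^ q : P2) =
      (C (g 0 0) * X 0 + C (g 1 0) * X 1) ^ p * (C (g 0 1) * X 0 + C (g 1 1) * X 1) ^ q := by
  simp [polyAct, Fin.sum_univ_two]

def dd (p q : ℕ) : Fin 2 →₀ ℕ := Finsupp.single 0 p + Finsupp.single 1 q

lemma mono_eq_monomial (p q : ℕ) : (X 0 ^ p * X 1 ^ q : P2) = monomial (dd p q) 1 := by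
  rw [X_pow_eq_monomial, X_pow_eq_monomial, monomial_mul, one_mul, dd]

lemma dd_inj {p q p' q' : ℕ} (h : dd p q = dd p' q') : p = p' ∧ q = q' := by
  have h0 := DFunLike.congr_fun h 0
  have h1 := DFunLike.congr_fun h 1
  simp [dd, Finsupp.single_apply] at h0 h1
  exact ⟨h0, h1⟩

lemma dd_fun (d : Fin 2 →₀ ℕ) : d = dd (d 0) (d 1) := by
  ext j; fin_cases j <;> simp [dd, Finsupp.single_apply]

lemma dd_degree (p q : ℕ) : (dd p q).degree = p + q := by
  rw [Finsupp.degree_apply, Finset.sum_subset (Finset.subset_univ _)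
    (by intro x _ hx; exact Finsupp.notMem_support_iff.mp hx)]
  simp [Fin.sum_univ_two, dd, Finsupp.single_apply]

lemma mono_homog {p q n : ℕ} (h : p + q = n) :
    (X 0 ^ p * X 1 ^ q : P2) ∈ homogeneousSubmodule (Fin 2) ℂ n := by
  rw [mem_homogeneousSubmodule, mono_eq_monomial]
  exact isHomogeneous_monomial 1 (by rw [dd_degree, h])

lemma coeff_dd_mono (p q p' q' : ℕ) :
    coeff (dd p q) (X 0 ^ p' * X 1 ^ q' : P2) = if p' = p ∧ q' = q then 1 else 0 := by
  rw [mono_eq_monomial, coeff_monomial]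
  by_cases h : p' = p ∧ q' = q
  · obtain ⟨rfl, rfl⟩ := h; simp
  · rw [if_neg h, if_neg (fun hd => h (dd_inj hd))]

def phi (p q r s : ℕ) : P2 ⊗[ℂ] P2 →ₗ[ℂ] ℂ :=
  (TensorProduct.lid ℂ ℂ).toLinearMap ∘ₗ
    TensorProduct.map (lcoeff ℂ (dd p q)) (lcoeff ℂ (dd r s))

lemma phi_tmul (p q r s : ℕ) (f g : P2) :
    phi p q r s (f ⊗ₜ g) = coeff (dd p q) f * coeff (dd r s) g := by
  simp [phi, smul_eq_mul]

def emt (p q r s : ℕ) : P2 ⊗[ℂ] P2 :=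
  (X 0 ^ p * X 1 ^ q : P2) ⊗ₜ[ℂ] (X 0 ^ r * X 1 ^ s : P2)

lemma phi_mt (p q r s p' q' r' s' : ℕ) :
    phi p q r s (emt p' q' r' s') =
      if p' = p ∧ q' = q ∧ r' = r ∧ s' = s then 1 else 0 := by
  rw [emt, phi_tmul, coeff_dd_mono, coeff_dd_mono]
  by_cases h1 : p' = p ∧ q' = q <;> by_cases h2 : r' = r ∧ s' = s <;>
    simp [h1, h2]

lemma homog_expand {n : ℕ} {f : P2} (hf : f ∈ homogeneousSubmodule (Fin 2) ℂ n) :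
    f = ∑ i ∈ Finset.range (n + 1),
        coeff (dd (n - i) i) f • (X 0 ^ (n - i) * X 1 ^ i : P2) := by
  apply MvPolynomial.ext
  intro d
  rw [MvPolynomial.coeff_sum]
  simp only [coeff_smul, smul_eq_mul]
  rw [dd_fun d]
  simp only [coeff_dd_mono]
  by_cases h0 : coeff (dd (d 0) (d 1)) f = 0
  · rw [h0]
    refine (Finset.sum_eq_zero ?_).symm
    intro i _
    split_ifs with h
    · rw [← h.1, ← h.2] at h0; rw [h0, zero_mul]
    · rw [mul_zero]
  · have hdeg : (dd (d 0) (d 1)).degree = n := by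
      have := ((mem_homogeneousSubmodule _ _).mp hf) h0
      rwa [Finsupp.degree_eq_weight_one]
    rw [dd_degree] at hdeg
    have hle : d 1 ≤ n := le_of_add_le_right hdeg.le
    have hd0 : d 0 = n - d 1 := by omega
    rw [Finset.sum_eq_single (d 1)]
    · rw [if_pos ⟨hd0.symm, rfl⟩, mul_one, hd0]
    · intro i _ hne
      rw [if_neg (fun hc => hne hc.2), mul_zero]
    · intro hmem
      exact absurd (Finset.mem_range.mpr (Nat.lt_succ_of_le hle)) hmem

lemma pA_one (p q : ℕ) : polyAct 1 (X 0 ^ p * X 1 ^ q : P2) = X 0 ^ p * X 1 ^ q := by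
  rw [polyAct_mono]; simp [Matrix.one_apply]

lemma pA_negone (p q : ℕ) : polyAct (-1) (X 0 ^ p * X 1 ^ q : P2)
    = ((-1 : ℂ) ^ (p + q)) • (X 0 ^ p * X 1 ^ q) := by
  rw [polyAct_mono]; simp [Matrix.one_apply, smul_eq_C_mul, map_pow, mul_pow, pow_add]; ring

lemma pA_D (p q : ℕ) : polyAct Dmat (X 0 ^ p * X 1 ^ q : P2)
    = (Complex.I ^ p * (-Complex.I) ^ q) • (X 0 ^ p * X 1 ^ q) := by
  rw [polyAct_mono]; simp [Dmat, smul_eq_C_mul, map_pow, mul_pow]; ring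

lemma pA_negD (p q : ℕ) : polyAct (-Dmat) (X 0 ^ p * X 1 ^ q : P2)
    = ((-Complex.I) ^ p * Complex.I ^ q) • (X 0 ^ p * X 1 ^ q) := by
  rw [polyAct_mono]; simp [Dmat, smul_eq_C_mul, map_pow, mul_pow]; ring

lemma pA_J (p q : ℕ) : polyAct Jmat (X 0 ^ p * X 1 ^ q : P2)
    = ((-1 : ℂ) ^ p) • (X 0 ^ q * X 1 ^ p) := by
  rw [polyAct_mono]; simp [Jmat, smul_eq_C_mul, map_pow, mul_pow]; ring

lemma pA_negJ (p q : ℕ) : polyAct (-Jmat) (X 0 ^ p * X 1 ^ q : P2)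
    = ((-1 : ℂ) ^ q) • (X 0 ^ q * X 1 ^ p) := by
  rw [polyAct_mono]; simp [Jmat, smul_eq_C_mul, map_pow, mul_pow]; ring

lemma pA_K (p q : ℕ) : polyAct Kmat (X 0 ^ p * X 1 ^ q : P2)
    = (Complex.I ^ (p + q)) • (X 0 ^ q * X 1 ^ p) := by
  rw [polyAct_mono]; simp [Kmat, smul_eq_C_mul, map_pow, mul_pow, pow_add]; ring

lemma pA_negK (p q : ℕ) : polyAct (-Kmat) (X 0 ^ p * X 1 ^ q : P2)
    = ((-Complex.I) ^ (p + q)) • (X 0 ^ q * X 1 ^ p) := by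
  rw [polyAct_mono]; simp [Kmat, smul_eq_C_mul, map_pow, mul_pow, pow_add]; ring

lemma tA_one (p q r s : ℕ) : tAct 1 1 (emt p q r s) = emt p q r s := by
  simp [tAct, emt, pA_one]

lemma tA_negone (p q r s : ℕ) : tAct (-1) (-1) (emt p q r s)
    = ((-1 : ℂ) ^ (p + q) * (-1 : ℂ) ^ (r + s)) • emt p q r s := by
  simp [tAct, emt, pA_negone, smul_tmul', tmul_smul, smul_smul, mul_comm]

lemma tA_D (p q r s : ℕ) : tAct Dmat Dmat (emt p q r s)
    = ((Complex.I ^ p * (-Complex.I) ^ q) * (Complex.I ^ r * (-Complex.I) ^ s)) • emt p q r s := by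
  simp [tAct, emt, pA_D, smul_tmul', tmul_smul, smul_smul, mul_comm, mul_left_comm, mul_assoc]

lemma tA_negD (p q r s : ℕ) : tAct (-Dmat) (-Dmat) (emt p q r s)
    = (((-Complex.I) ^ p * Complex.I ^ q) * ((-Complex.I) ^ r * Complex.I ^ s)) • emt p q r s := by
  simp [tAct, emt, pA_negD, smul_tmul', tmul_smul, smul_smul, mul_comm, mul_left_comm, mul_assoc]

lemma tA_J (p q r s : ℕ) : tAct Jmat Jmat (emt p q r s)
    = ((-1 : ℂ) ^ p * (-1 : ℂ) ^ r) • emt q p s r := by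
  simp [tAct, emt, pA_J, smul_tmul', tmul_smul, smul_smul, mul_comm]

lemma tA_negJ (p q r s : ℕ) : tAct (-Jmat) (-Jmat) (emt p q r s)
    = ((-1 : ℂ) ^ q * (-1 : ℂ) ^ s) • emt q p s r := by
  simp [tAct, emt, pA_negJ, smul_tmul', tmul_smul, smul_smul, mul_comm]

lemma tA_K (p q r s : ℕ) : tAct Kmat Kmat (emt p q r s)
    = (Complex.I ^ (p + q) * Complex.I ^ (r + s)) • emt q p s r := by
  simp [tAct, emt, pA_K, smul_tmul', tmul_smul, smul_smul, mul_comm]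

lemma tA_negK (p q r s : ℕ) : tAct (-Kmat) (-Kmat) (emt p q r s)
    = ((-Complex.I) ^ (p + q) * (-Complex.I) ^ (r + s)) • emt q p s r := by
  simp [tAct, emt, pA_negK, smul_tmul', tmul_smul, smul_smul, mul_comm]

lemma emt_mem {l m p q r s : ℕ} (h1 : p + q = l) (h2 : r + s = m) :
    emt p q r s ∈ Vbideg l m :=
  ⟨(⟨_, mono_homog h1⟩ : homogeneousSubmodule (Fin 2) ℂ l) ⊗ₜ[ℂ]
    (⟨_, mono_homog h2⟩ : homogeneousSubmodule (Fin 2) ℂ m), rfl⟩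

def TT (l m : ℕ) : P2 ⊗[ℂ] P2 →ₗ[ℂ] P2 ⊗[ℂ] P2 :=
  ∑ i ∈ Finset.range (l+1), ∑ a ∈ Finset.range (m+1),
    (phi (l-i) i (m-a) a).smulRight (emt (l-i) i (m-a) a)

lemma TT_apply (l m : ℕ) (w : P2 ⊗[ℂ] P2) :
    TT l m w = ∑ i ∈ Finset.range (l+1), ∑ a ∈ Finset.range (m+1),
      phi (l-i) i (m-a) a w • emt (l-i) i (m-a) a := by
  simp [TT, LinearMap.sum_apply, LinearMap.smulRight_apply]

lemma TT_fix {l m : ℕ} {w : P2 ⊗[ℂ] P2} (hw : w ∈ Vbideg l m) : TT l m w = w := by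
  obtain ⟨x, rfl⟩ := hw
  induction x with
  | zero => simp
  | add x y hx hy => rw [map_add, map_add, hx, hy]
  | tmul p q =>
    rw [TensorProduct.map_tmul, TT_apply]
    simp only [Submodule.coe_subtype, phi_tmul]
    conv_rhs => rw [homog_expand p.2, homog_expand q.2]
    rw [TensorProduct.sum_tmul]
    refine Finset.sum_congr rfl fun i _ => ?_
    rw [TensorProduct.tmul_sum]
    refine Finset.sum_congr rfl fun a _ => ?_
    rw [emt, TensorProduct.smul_tmul, TensorProduct.smul_tmul', smul_smul, mul_comm,
      TensorProduct.smul_tmul]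

lemma phi_of_sum {l m : ℕ} (F : ℕ → ℕ → ℂ) {i₀ a₀ : ℕ} (hi : i₀ ≤ l) (ha : a₀ ≤ m) :
    phi (l-i₀) i₀ (m-a₀) a₀ (∑ i ∈ Finset.range (l+1), ∑ a ∈ Finset.range (m+1),
      F i a • emt (l-i) i (m-a) a) = F i₀ a₀ := by
  rw [map_sum, Finset.sum_eq_single i₀]
  · rw [map_sum, Finset.sum_eq_single a₀]
    · rw [map_smul, phi_mt, if_pos ⟨rfl, rfl, rfl, rfl⟩, smul_eq_mul, mul_one]
    · intro b _ hb
      rw [map_smul, phi_mt, if_neg (fun hc => hb hc.2.2.2), smul_zero]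
    · intro h; exact absurd (Finset.mem_range.mpr (Nat.lt_succ_of_le ha)) h
  · intro b _ hb
    rw [map_sum]
    refine Finset.sum_eq_zero fun a _ => ?_
    rw [map_smul, phi_mt, if_neg (fun hc => hb hc.2.1), smul_zero]
  · intro h; exact absurd (Finset.mem_range.mpr (Nat.lt_succ_of_le hi)) h

lemma phi_of_sum_swap {l m : ℕ} (F : ℕ → ℕ → ℂ) {i₀ a₀ : ℕ} (hi : i₀ ≤ l) (ha : a₀ ≤ m) :
    phi (l-i₀) i₀ (m-a₀) a₀ (∑ i ∈ Finset.range (l+1), ∑ a ∈ Finset.range (m+1),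
      F i a • emt i (l-i) a (m-a)) = F (l-i₀) (m-a₀) := by
  rw [map_sum, Finset.sum_eq_single (l-i₀)]
  · rw [map_sum, Finset.sum_eq_single (m-a₀)]
    · rw [map_smul, phi_mt,
        if_pos ⟨rfl, by omega, rfl, by omega⟩, smul_eq_mul, mul_one]
    · intro b hb2 hb
      rw [map_smul, phi_mt, if_neg (fun hc => hb hc.2.2.1), smul_zero]
    · intro h; exact absurd (Finset.mem_range.mpr (by omega)) h
  · intro b _ hb
    rw [map_sum]
    refine Finset.sum_eq_zero fun a _ => ?_
    rw [map_smul, phi_mt, if_neg (fun hc => hb hc.1), smul_zero]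
  · intro h; exact absurd (Finset.mem_range.mpr (by omega)) h

def fixSub (l m : ℕ) : Submodule ℂ (P2 ⊗[ℂ] P2) where
  carrier := {w | w ∈ Vbideg l m ∧ ∀ A ∈ Q8, tAct A A w = w}
  add_mem' := fun h1 h2 => ⟨add_mem h1.1 h2.1,
    fun A hA => by rw [map_add, h1.2 A hA, h2.2 A hA]⟩
  zero_mem' := ⟨zero_mem _, fun A _ => map_zero _⟩
  smul_mem' := fun c w h => ⟨Submodule.smul_mem _ _ h.1,
    fun A hA => by rw [map_smul, h.2 A hA]⟩

-- scalar helpers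
lemma neg_one_parity {x y : ℕ} (h : Even (x + y)) : (-1 : ℂ) ^ x = (-1 : ℂ) ^ y := by
  obtain ⟨k, hk⟩ := h
  have h1 : (-1 : ℂ) ^ x * (-1) ^ y = 1 := by
    rw [← pow_add, hk, ← two_mul, pow_mul]; norm_num
  have h2 : (-1 : ℂ) ^ y * (-1) ^ y = 1 := by
    rw [← pow_add, ← two_mul, pow_mul]; norm_num
  calc (-1 : ℂ) ^ x = (-1 : ℂ) ^ x * ((-1) ^ y * (-1) ^ y) := by rw [h2, mul_one]
    _ = ((-1 : ℂ) ^ x * (-1) ^ y) * (-1) ^ y := by ring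
    _ = (-1 : ℂ) ^ y := by rw [h1, one_mul]

lemma I_pow_even {n : ℕ} (h : Even n) : Complex.I ^ n = (-1 : ℂ) ^ (n / 2) := by
  obtain ⟨k, hk⟩ := h
  have hk2 : n / 2 = k := by omega
  rw [hk2, hk, ← two_mul, pow_mul, Complex.I_sq]

lemma scal_D (p q r s : ℕ) :
    Complex.I ^ p * (-Complex.I) ^ q * (Complex.I ^ r * (-Complex.I) ^ s)
      = Complex.I ^ (p + q + r + s) * (-1) ^ (q + s) := by
  rw [(by ring : (-Complex.I) = (-1 : ℂ) * Complex.I)]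
  simp only [mul_pow, pow_add]; ring

lemma scal_negD (p q r s : ℕ) :
    (-Complex.I) ^ p * Complex.I ^ q * ((-Complex.I) ^ r * Complex.I ^ s)
      = Complex.I ^ (p + q + r + s) * (-1) ^ (p + r) := by
  rw [(by ring : (-Complex.I) = (-1 : ℂ) * Complex.I)]
  simp only [mul_pow, pow_add]; ring

lemma scal_negone (p q : ℕ) : (-1 : ℂ) ^ p * (-1 : ℂ) ^ q = (-1 : ℂ) ^ (p + q) := by
  rw [pow_add]

lemma scal_K (p q : ℕ) : Complex.I ^ p * Complex.I ^ q = Complex.I ^ (p + q) := by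
  rw [pow_add]

lemma scal_negK (p q : ℕ) :
    (-Complex.I) ^ p * (-Complex.I) ^ q = Complex.I ^ (p + q) * (-1) ^ (p + q) := by
  rw [(by ring : (-Complex.I) = (-1 : ℂ) * Complex.I)]
  simp only [mul_pow, pow_add]; ring

lemma gen_fixed_even {l m i a : ℕ} (hi : i ≤ l) (ha : a ≤ m) (hlm : Even (l + m))
    (hev : Even ((l + m) / 2)) (hia : Even (i + a)) :
    ∀ A ∈ Q8, tAct A A (emt (l-i) i (m-a) a + emt i (l-i) a (m-a))
      = emt (l-i) i (m-a) a + emt i (l-i) a (m-a) := by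
  have e1 : l - i + i = l := by omega
  have e2 : m - a + a = m := by omega
  have e3 : i + (l - i) = l := by omega
  have e4 : a + (m - a) = m := by omega
  have hIe : Complex.I ^ (l + m) = 1 := by rw [I_pow_even hlm, hev.neg_one_pow]
  have hp1 : (-1 : ℂ) ^ (i + a) = 1 := hia.neg_one_pow
  have hp2 : (-1 : ℂ) ^ (l - i + (m - a)) = 1 := by
    rw [neg_one_parity (x := l - i + (m - a)) (y := i + a)
      (by rw [(by omega : l - i + (m - a) + (i + a) = l + m)]; exact hlm), hp1]
  intro A hA
  simp only [Q8, Set.mem_insert_iff, Set.mem_singleton_iff] at hA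
  rcases hA with rfl | rfl | rfl | rfl | rfl | rfl | rfl | rfl
  · rw [map_add, tA_one, tA_one]
  · rw [map_add, tA_negone, tA_negone, e1, e2, e3, e4, scal_negone,
      Even.neg_one_pow hlm, one_smul, one_smul]
  · rw [map_add, tA_D, tA_D, scal_D, scal_D,
      (by omega : l - i + i + (m - a) + a = l + m),
      (by omega : i + (l - i) + a + (m - a) = l + m), hIe, one_mul, one_mul,
      hp1, hp2, one_smul, one_smul]
  · rw [map_add, tA_negD, tA_negD, scal_negD, scal_negD,
      (by omega : l - i + i + (m - a) + a = l + m),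
      (by omega : i + (l - i) + a + (m - a) = l + m), hIe, one_mul, one_mul,
      hp1, hp2, one_smul, one_smul]
  · rw [map_add, tA_J, tA_J, scal_negone, scal_negone, hp1, hp2, one_smul, one_smul,
      add_comm]
  · rw [map_add, tA_negJ, tA_negJ, scal_negone, scal_negone, hp1, hp2, one_smul, one_smul,
      add_comm]
  · rw [map_add, tA_K, tA_K, e1, e2, e3, e4, scal_K, hIe, one_smul, one_smul, add_comm]
  · rw [map_add, tA_negK, tA_negK, e1, e2, e3, e4, scal_negK, hIe,
      Even.neg_one_pow hlm, one_mul, one_smul, one_smul, add_comm]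

lemma gen_fixed_odd {l m i a : ℕ} (hi : i ≤ l) (ha : a ≤ m) (hlm : Even (l + m))
    (hod : Odd ((l + m) / 2)) (hia : Odd (i + a)) :
    ∀ A ∈ Q8, tAct A A (emt (l-i) i (m-a) a - emt i (l-i) a (m-a))
      = emt (l-i) i (m-a) a - emt i (l-i) a (m-a) := by
  have e1 : l - i + i = l := by omega
  have e2 : m - a + a = m := by omega
  have e3 : i + (l - i) = l := by omega
  have e4 : a + (m - a) = m := by omega
  have hIe : Complex.I ^ (l + m) = -1 := by rw [I_pow_even hlm, hod.neg_one_pow]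
  have hp1 : (-1 : ℂ) ^ (i + a) = -1 := hia.neg_one_pow
  have hp2 : (-1 : ℂ) ^ (l - i + (m - a)) = -1 := by
    rw [neg_one_parity (x := l - i + (m - a)) (y := i + a)
      (by rw [(by omega : l - i + (m - a) + (i + a) = l + m)]; exact hlm), hp1]
  intro A hA
  simp only [Q8, Set.mem_insert_iff, Set.mem_singleton_iff] at hA
  rcases hA with rfl | rfl | rfl | rfl | rfl | rfl | rfl | rfl
  · rw [map_sub, tA_one, tA_one]
  · rw [map_sub, tA_negone, tA_negone, e1, e2, e3, e4, scal_negone,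
      Even.neg_one_pow hlm, one_smul, one_smul]
  · rw [map_sub, tA_D, tA_D, scal_D, scal_D,
      (by omega : l - i + i + (m - a) + a = l + m),
      (by omega : i + (l - i) + a + (m - a) = l + m), hIe, hp1, hp2]
    norm_num
  · rw [map_sub, tA_negD, tA_negD, scal_negD, scal_negD,
      (by omega : l - i + i + (m - a) + a = l + m),
      (by omega : i + (l - i) + a + (m - a) = l + m), hIe, hp1, hp2]
    norm_num
  · rw [map_sub, tA_J, tA_J, scal_negone, scal_negone, hp1, hp2]
    module
  · rw [map_sub, tA_negJ, tA_negJ, scal_negone, scal_negone, hp1, hp2]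
    module
  · rw [map_sub, tA_K, tA_K, e1, e2, e3, e4, scal_K, hIe]
    module
  · rw [map_sub, tA_negK, tA_negK, e1, e2, e3, e4, scal_negK, hIe,
      Even.neg_one_pow hlm]
    module

def cc (l m : ℕ) (w : P2 ⊗[ℂ] P2) (i a : ℕ) : ℂ := phi (l-i) i (m-a) a w

lemma expand_w {l m : ℕ} {w : P2 ⊗[ℂ] P2} (hw : w ∈ Vbideg l m) :
    w = ∑ i ∈ Finset.range (l+1), ∑ a ∈ Finset.range (m+1),
      cc l m w i a • emt (l-i) i (m-a) a :=
  (TT_fix hw).symm.trans (TT_apply l m w)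

lemma rel_D {l m : ℕ} {w : P2 ⊗[ℂ] P2} (hw : w ∈ Vbideg l m)
    (hfix : tAct Dmat Dmat w = w) {i a : ℕ} (hi : i ≤ l) (ha : a ≤ m) :
    (Complex.I ^ (l+m) * (-1) ^ (i+a)) * cc l m w i a = cc l m w i a := by
  have hexp := expand_w hw
  have h1 : tAct Dmat Dmat w = ∑ i ∈ Finset.range (l+1), ∑ a ∈ Finset.range (m+1),
      (fun i a => cc l m w i a *
        (Complex.I ^ (l-i) * (-Complex.I) ^ i * (Complex.I ^ (m-a) * (-Complex.I) ^ a))) i a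
        • emt (l-i) i (m-a) a := by
    conv_lhs => rw [hexp]
    rw [map_sum]
    refine Finset.sum_congr rfl fun i _ => ?_
    rw [map_sum]
    refine Finset.sum_congr rfl fun a _ => ?_
    rw [map_smul, tA_D, smul_smul]
  have h2 := congrArg (phi (l-i) i (m-a) a) hfix
  rw [h1, phi_of_sum _ hi ha] at h2
  rw [scal_D, (by omega : l - i + i + (m-a) + a = l + m)] at h2
  calc (Complex.I ^ (l+m) * (-1) ^ (i+a)) * cc l m w i a
      = cc l m w i a * (Complex.I ^ (l+m) * (-1) ^ (i+a)) := by ring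
    _ = phi (l-i) i (m-a) a w := h2
    _ = cc l m w i a := rfl

lemma rel_J {l m : ℕ} {w : P2 ⊗[ℂ] P2} (hw : w ∈ Vbideg l m)
    (hfix : tAct Jmat Jmat w = w) {i a : ℕ} (hi : i ≤ l) (ha : a ≤ m) :
    cc l m w (l-i) (m-a) * (-1) ^ (i+a) = cc l m w i a := by
  have hexp := expand_w hw
  have h1 : tAct Jmat Jmat w = ∑ i ∈ Finset.range (l+1), ∑ a ∈ Finset.range (m+1),
      (fun i a => cc l m w i a * ((-1 : ℂ) ^ (l-i) * (-1 : ℂ) ^ (m-a))) i a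
        • emt i (l-i) a (m-a) := by
    conv_lhs => rw [hexp]
    rw [map_sum]
    refine Finset.sum_congr rfl fun i _ => ?_
    rw [map_sum]
    refine Finset.sum_congr rfl fun a _ => ?_
    rw [map_smul, tA_J, smul_smul]
  have h2 := congrArg (phi (l-i) i (m-a) a) hfix
  rw [h1, phi_of_sum_swap _ hi ha] at h2
  rw [(by omega : l - (l-i) = i), (by omega : m - (m-a) = a), scal_negone] at h2
  exact h2

lemma reflect_sum {l m : ℕ} (F : ℕ → ℕ → ℂ) :
    ∑ i ∈ Finset.range (l+1), ∑ a ∈ Finset.range (m+1), F i a • emt i (l-i) a (m-a)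
      = ∑ i ∈ Finset.range (l+1), ∑ a ∈ Finset.range (m+1),
        F (l-i) (m-a) • emt (l-i) i (m-a) a := by
  conv_lhs => rw [← Finset.sum_range_reflect]
  refine Finset.sum_congr rfl fun i hi => ?_
  conv_lhs => rw [← Finset.sum_range_reflect]
  refine Finset.sum_congr rfl fun a ha => ?_
  have hi' : i ≤ l := by simpa [Nat.lt_succ_iff] using hi
  have ha' : a ≤ m := by simpa [Nat.lt_succ_iff] using ha
  rw [(by omega : l + 1 - 1 - i = l - i), (by omega : m + 1 - 1 - a = m - a),
    (by omega : l - (l - i) = i), (by omega : m - (m - a) = a)]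

lemma mem_fixSub {l m : ℕ} {w : P2 ⊗[ℂ] P2} :
    w ∈ fixSub l m ↔ (w ∈ Vbideg l m ∧ ∀ A ∈ Q8, tAct A A w = w) := Iff.rfl

theorem statement2 (l m : ℕ) (hlm : Even (l + m)) :
    (Even ((l + m) / 2) →
      {w : P2 ⊗[ℂ] P2 | w ∈ Vbideg l m ∧ ∀ A ∈ Q8, tAct A A w = w}
        = ↑(Submodule.span ℂ
            {w : P2 ⊗[ℂ] P2 | ∃ i a : ℕ, i ≤ l ∧ a ≤ m ∧ Even (i + a) ∧
              w = (X 0 ^ (l - i) * X 1 ^ i : P2) ⊗ₜ[ℂ] (X 0 ^ (m - a) * X 1 ^ a : P2)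
                + (X 0 ^ i * X 1 ^ (l - i) : P2) ⊗ₜ[ℂ] (X 0 ^ a * X 1 ^ (m - a) : P2)})) ∧
    (Odd ((l + m) / 2) →
      {w : P2 ⊗[ℂ] P2 | w ∈ Vbideg l m ∧ ∀ A ∈ Q8, tAct A A w = w}
        = ↑(Submodule.span ℂ
            {w : P2 ⊗[ℂ] P2 | ∃ i a : ℕ, i ≤ l ∧ a ≤ m ∧ Odd (i + a) ∧
              w = (X 0 ^ (l - i) * X 1 ^ i : P2) ⊗ₜ[ℂ] (X 0 ^ (m - a) * X 1 ^ a : P2)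
                - (X 0 ^ i * X 1 ^ (l - i) : P2) ⊗ₜ[ℂ] (X 0 ^ a * X 1 ^ (m - a) : P2)})) := by
  constructor
  · -- even case
    intro hev
    apply Set.eq_of_subset_of_subset
    · rintro w ⟨hw, hfix⟩
      have hzero : ∀ i ≤ l, ∀ a ≤ m, Odd (i + a) → cc l m w i a = 0 := by
        intro i hi a ha hodd
        have h := rel_D hw (hfix Dmat (by simp [Q8])) hi ha
        rw [I_pow_even hlm, hev.neg_one_pow, one_mul, hodd.neg_one_pow] at h
        linear_combination (-1/2 : ℂ) * h
      have hsym : ∀ i ≤ l, ∀ a ≤ m, cc l m w (l-i) (m-a) = cc l m w i a := by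
        intro i hi a ha
        rcases Nat.even_or_odd (i + a) with hpar | hpar
        · have h := rel_J hw (hfix Jmat (by simp [Q8])) hi ha
          rwa [hpar.neg_one_pow, mul_one] at h
        · have hodd2 : Odd (l - i + (m - a)) := by
            rw [(by omega : l - i + (m - a) = (l + m) - (i + a))]
            exact Nat.Even.sub_odd (by omega) hlm hpar
          rw [hzero i hi a ha hpar,
            hzero (l-i) (by omega) (m-a) (by omega) hodd2]
      have hw_eq : w = (2⁻¹ : ℂ) • ∑ i ∈ Finset.range (l+1), ∑ a ∈ Finset.range (m+1),
          cc l m w i a • (emt (l-i) i (m-a) a + emt i (l-i) a (m-a)) := by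
        have hs : ∑ i ∈ Finset.range (l+1), ∑ a ∈ Finset.range (m+1),
            cc l m w i a • emt i (l-i) a (m-a)
            = ∑ i ∈ Finset.range (l+1), ∑ a ∈ Finset.range (m+1),
              cc l m w i a • emt (l-i) i (m-a) a := by
          rw [reflect_sum]
          refine Finset.sum_congr rfl fun i hi => Finset.sum_congr rfl fun a ha => ?_
          rw [hsym i (by simpa [Nat.lt_succ_iff] using hi) a
            (by simpa [Nat.lt_succ_iff] using ha)]
        simp only [smul_add, Finset.sum_add_distrib]
        rw [hs, ← expand_w hw, ← two_smul ℂ, smul_smul]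
        norm_num
      rw [SetLike.mem_coe, hw_eq]
      refine Submodule.smul_mem _ _ (Submodule.sum_mem _ fun i hi =>
        Submodule.sum_mem _ fun a ha => ?_)
      rcases Nat.even_or_odd (i + a) with hpar | hpar
      · exact Submodule.smul_mem _ _ (Submodule.subset_span
          ⟨i, a, by simpa [Nat.lt_succ_iff] using hi, by simpa [Nat.lt_succ_iff] using ha,
            hpar, rfl⟩)
      · rw [hzero i (by simpa [Nat.lt_succ_iff] using hi) a
          (by simpa [Nat.lt_succ_iff] using ha) hpar, zero_smul]
        exact Submodule.zero_mem _
    · intro w hw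
      refine mem_fixSub.mp ((Submodule.span_le.mpr ?_ : _ ≤ fixSub l m)
        (SetLike.mem_coe.mp hw))
      rintro s ⟨i, a, hi, ha, hpar, rfl⟩
      exact mem_fixSub.mpr ⟨add_mem (emt_mem (by omega) (by omega))
        (emt_mem (by omega) (by omega)), gen_fixed_even hi ha hlm hev hpar⟩
  · -- odd case
    intro hod
    apply Set.eq_of_subset_of_subset
    · rintro w ⟨hw, hfix⟩
      have hzero : ∀ i ≤ l, ∀ a ≤ m, Even (i + a) → cc l m w i a = 0 := by
        intro i hi a ha hpar
        have h := rel_D hw (hfix Dmat (by simp [Q8])) hi ha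
        rw [I_pow_even hlm, hod.neg_one_pow, hpar.neg_one_pow, mul_one] at h
        linear_combination (-1/2 : ℂ) * h
      have hsym : ∀ i ≤ l, ∀ a ≤ m, cc l m w (l-i) (m-a) = - cc l m w i a := by
        intro i hi a ha
        rcases Nat.even_or_odd (i + a) with hpar | hpar
        · have hev2 : Even (l - i + (m - a)) := by
            rw [(by omega : l - i + (m - a) = (l + m) - (i + a))]
            exact (Nat.even_sub (by omega)).mpr (iff_of_true hlm hpar)
          rw [hzero i hi a ha hpar,
            hzero (l-i) (by omega) (m-a) (by omega) hev2, neg_zero]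
        · have h := rel_J hw (hfix Jmat (by simp [Q8])) hi ha
          rw [hpar.neg_one_pow] at h
          linear_combination -h
      have hw_eq : w = (2⁻¹ : ℂ) • ∑ i ∈ Finset.range (l+1), ∑ a ∈ Finset.range (m+1),
          cc l m w i a • (emt (l-i) i (m-a) a - emt i (l-i) a (m-a)) := by
        have hs : ∑ i ∈ Finset.range (l+1), ∑ a ∈ Finset.range (m+1),
            cc l m w i a • emt i (l-i) a (m-a)
            = - ∑ i ∈ Finset.range (l+1), ∑ a ∈ Finset.range (m+1),
              cc l m w i a • emt (l-i) i (m-a) a := by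
          rw [reflect_sum]
          rw [← Finset.sum_neg_distrib]
          refine Finset.sum_congr rfl fun i hi => ?_
          rw [← Finset.sum_neg_distrib]
          refine Finset.sum_congr rfl fun a ha => ?_
          rw [hsym i (by simpa [Nat.lt_succ_iff] using hi) a
            (by simpa [Nat.lt_succ_iff] using ha)]
          module
        have hsum : ∑ i ∈ Finset.range (l+1), ∑ a ∈ Finset.range (m+1),
            cc l m w i a • (emt (l-i) i (m-a) a - emt i (l-i) a (m-a))
            = (2 : ℂ) • ∑ i ∈ Finset.range (l+1), ∑ a ∈ Finset.range (m+1),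
              cc l m w i a • emt (l-i) i (m-a) a := by
          simp only [smul_sub, Finset.sum_sub_distrib]
          rw [hs, sub_neg_eq_add, two_smul]
        rw [hsum, smul_smul, (by norm_num : (2⁻¹ : ℂ) * 2 = 1), one_smul]
        exact expand_w hw
      rw [SetLike.mem_coe, hw_eq]
      refine Submodule.smul_mem _ _ (Submodule.sum_mem _ fun i hi =>
        Submodule.sum_mem _ fun a ha => ?_)
      rcases Nat.even_or_odd (i + a) with hpar | hpar
      · rw [hzero i (by simpa [Nat.lt_succ_iff] using hi) a
          (by simpa [Nat.lt_succ_iff] using ha) hpar, zero_smul]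
        exact Submodule.zero_mem _
      · exact Submodule.smul_mem _ _ (Submodule.subset_span
          ⟨i, a, by simpa [Nat.lt_succ_iff] using hi, by simpa [Nat.lt_succ_iff] using ha,
            hpar, rfl⟩)
    · intro w hw
      refine mem_fixSub.mp ((Submodule.span_le.mpr ?_ : _ ≤ fixSub l m)
        (SetLike.mem_coe.mp hw))
      rintro s ⟨i, a, hi, ha, hpar, rfl⟩
      exact mem_fixSub.mpr ⟨sub_mem (emt_mem (by omega) (by omega))
        (emt_mem (by omega) (by omega)), gen_fixed_odd hi ha hlm hod hpar⟩

end
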